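/- Let (V_n)_{n≥0} be a nonnegative stochastic process adapted to a filtration (F_n) with V_n ≥ 1, let τ be the first hitting time of a set, and suppose that on {n < τ} we have E[V_{n+1} | F_n] ≤ e^{-c} V_n for some constant c > 0. Then E[e^{c τ}] ≤ V_0, i.e., τ has a finite exponential moment bounded by the initial Lyapunov value. -/

import Mathlib

open MeasureTheory

/-- Exponential moment of a hitting time from a supermartingale Lyapunov drift:
if V_n ≥ 1, and E[V_{n+1} | F_n] ≤ e^{-c} V_n on {n < τ}, then E[e^{cτ}] ≤ E[V_0]. -/
theorem stmt12 {Ω : Type*} [m0 : MeasurableSpace Ω] (μ : Measure Ω)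
    [IsProbabilityMeasure μ]
    (ℱ : Filtration ℕ m0) (V : ℕ → Ω → ℝ) (τ : Ω → ℕ) (c : ℝ)
    (hc : 0 < c)
    (hadapted : Adapted ℱ V)
    (hint : ∀ n, Integrable (V n) μ)
    (hV1 : ∀ n, ∀ᵐ ω ∂μ, 1 ≤ V n ω)
    (hτ : IsStoppingTime ℱ (fun ω => (τ ω : WithTop ℕ)))
    (hdrift : ∀ n, ∀ᵐ ω ∂μ, n < τ ω → (μ[V (n + 1) | ℱ n]) ω ≤ Real.exp (-c) * V n ω) :
    ∫ ω, Real.exp (c * (τ ω : ℝ)) ∂μ ≤ ∫ ω, V 0 ω ∂μ := by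
  classical
  have hτ' : ∀ n, MeasurableSet[ℱ n] {ω | τ ω ≤ n} := fun n => by simpa using hτ n
  -- stopped Lyapunov process
  set G : ℕ → Ω → ℝ := fun n ω => Real.exp (c * ((min (τ ω) n : ℕ) : ℝ)) * V (min (τ ω) n) ω with hG
  set A : ℕ → Set Ω := fun n => {ω | n < τ ω} with hA
  have hAmeas : ∀ n, MeasurableSet (A n) := by
    intro n
    have : A n = {ω | τ ω ≤ n}ᶜ := by ext ω; simp [hA, not_le]
    rw [this]
    exact (ℱ.le n _ (hτ' n)).compl
  have hAmeasF : ∀ n, MeasurableSet[ℱ n] (A n) := by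
    intro n
    have : A n = {ω | τ ω ≤ n}ᶜ := by ext ω; simp [hA, not_le]
    rw [this]
    exact (hτ' n).compl
  -- decomposition
  have hdecomp : ∀ n ω, G (n + 1) ω = G n ω +
      Set.indicator (A n) (fun ω => Real.exp (c * (n + 1 : ℕ)) * V (n + 1) ω
        - Real.exp (c * (n : ℕ)) * V n ω) ω := by
    intro n ω
    by_cases h : n < τ ω
    · have h1 : min (τ ω) n = n := min_eq_right h.le
      have h2 : min (τ ω) (n + 1) = n + 1 := min_eq_right h
      have hmem : ω ∈ A n := h
      rw [Set.indicator_of_mem hmem]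
      simp only [hG, h1, h2]
      push_cast
      ring
    · have hle : τ ω ≤ n := not_lt.mp h
      have h1 : min (τ ω) n = τ ω := min_eq_left hle
      have h2 : min (τ ω) (n + 1) = τ ω := min_eq_left (hle.trans n.le_succ)
      have hmem : ω ∉ A n := h
      rw [Set.indicator_of_notMem hmem]
      simp only [hG, h1, h2]
      ring
  -- integrability and bound by induction
  have key : ∀ n, Integrable (G n) μ ∧ ∫ ω, G n ω ∂μ ≤ ∫ ω, V 0 ω ∂μ := by
    intro n
    induction n with
    | zero =>
      have : G 0 = fun ω => V 0 ω := by
        funext ω; simp [hG]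
      rw [this]
      exact ⟨hint 0, le_refl _⟩
    | succ n ih =>
      obtain ⟨ihInt, ihBound⟩ := ih
      have hind : Integrable (Set.indicator (A n)
          (fun ω => Real.exp (c * (n + 1 : ℕ)) * V (n + 1) ω
            - Real.exp (c * (n : ℕ)) * V n ω)) μ := by
        exact (Integrable.sub ((hint (n+1)).const_mul _) ((hint n).const_mul _)).indicator
          (hAmeas n)
      have hGeq : G (n + 1) = fun ω => G n ω + Set.indicator (A n)
          (fun ω => Real.exp (c * (n + 1 : ℕ)) * V (n + 1) ω
            - Real.exp (c * (n : ℕ)) * V n ω) ω := by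
        funext ω; exact hdecomp n ω
      constructor
      · rw [hGeq]; exact ihInt.add hind
      · rw [hGeq, integral_add ihInt hind]
        have hkey : ∫ ω, Set.indicator (A n)
            (fun ω => Real.exp (c * (n + 1 : ℕ)) * V (n + 1) ω
              - Real.exp (c * (n : ℕ)) * V n ω) ω ∂μ ≤ 0 := by
          rw [integral_indicator (hAmeas n)]
          rw [integral_sub (((hint (n+1)).const_mul _).restrict)
            (((hint n).const_mul _).restrict)]
          rw [sub_nonpos]
          rw [integral_const_mul, integral_const_mul]
          have step1 : ∫ ω in A n, V (n + 1) ω ∂μ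
              = ∫ ω in A n, (μ[V (n + 1) | ℱ n]) ω ∂μ :=
            (setIntegral_condExp (ℱ.le n) (hint (n+1)) (hAmeasF n)).symm
          have step2 : ∫ ω in A n, (μ[V (n + 1) | ℱ n]) ω ∂μ
              ≤ ∫ ω in A n, Real.exp (-c) * V n ω ∂μ := by
            refine setIntegral_mono_ae_restrict integrable_condExp.restrict
              (((hint n).const_mul _).restrict) ?_
            exact (ae_restrict_iff' (hAmeas n)).2 (by
              filter_upwards [hdrift n] with ω hω hmem
              exact hω hmem)
          calc Real.exp (c * ((n:ℕ) + 1 : ℕ)) * ∫ ω in A n, V (n + 1) ω ∂μ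
              ≤ Real.exp (c * ((n:ℕ) + 1 : ℕ)) * ∫ ω in A n, Real.exp (-c) * V n ω ∂μ := by
                rw [step1]
                exact mul_le_mul_of_nonneg_left step2 (Real.exp_nonneg _)
            _ = Real.exp (c * (n : ℕ)) * ∫ ω in A n, V n ω ∂μ := by
                rw [integral_const_mul, ← mul_assoc, ← Real.exp_add]
                push_cast
                ring_nf
        linarith
  -- pointwise bound exp(c min(τ,n)) ≤ G n a.e.
  have hτm : Measurable τ := by
    apply measurable_to_countable'
    intro n
    have : τ ⁻¹' {n} = {ω | τ ω ≤ n} \ ⋃ k ∈ Finset.range n, {ω | τ ω ≤ k} := by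
      ext ω
      simp only [Set.mem_preimage, Set.mem_singleton_iff, Set.mem_diff, Set.mem_setOf_eq,
        Set.mem_iUnion, not_exists, Finset.mem_range]
      constructor
      · rintro rfl
        exact ⟨le_refl _, fun k hk => by omega⟩
      · rintro ⟨h1, h2⟩
        by_contra hne
        have : τ ω < n := lt_of_le_of_ne h1 hne
        exact h2 (τ ω) this (le_refl _)
    rw [this]
    exact (ℱ.le n _ (hτ' n)).diff
      (MeasurableSet.biUnion (Finset.range n).countable_toSet
        (fun k _ => ℱ.le k _ (hτ' k)))
  set f : ℕ → Ω → ℝ := fun n ω => Real.exp (c * ((min (τ ω) n : ℕ) : ℝ)) with hf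
  have hVall : ∀ᵐ ω ∂μ, ∀ k, 1 ≤ V k ω := ae_all_iff.2 hV1
  have hlin : ∀ n, ∫⁻ ω, ENNReal.ofReal (f n ω) ∂μ ≤ ENNReal.ofReal (∫ ω, V 0 ω ∂μ) := by
    intro n
    have h1 : ∫⁻ ω, ENNReal.ofReal (f n ω) ∂μ ≤ ∫⁻ ω, ENNReal.ofReal (G n ω) ∂μ := by
      refine lintegral_mono_ae ?_
      filter_upwards [hVall] with ω hω
      refine ENNReal.ofReal_le_ofReal ?_
      exact le_mul_of_one_le_right (Real.exp_nonneg _) (hω _)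
    have hGnn : 0 ≤ᵐ[μ] G n := by
      filter_upwards [hVall] with ω hω
      exact mul_nonneg (Real.exp_nonneg _) ((zero_le_one.trans (hω _)))
    have h2 : ∫⁻ ω, ENNReal.ofReal (G n ω) ∂μ = ENNReal.ofReal (∫ ω, G n ω ∂μ) :=
      (ofReal_integral_eq_lintegral_ofReal (key n).1 hGnn).symm
    rw [h2] at h1
    exact h1.trans (ENNReal.ofReal_le_ofReal (key n).2)
  have hmeasf : ∀ n, Measurable (fun ω => ENNReal.ofReal (f n ω)) := by
    intro n
    have : (fun ω => ENNReal.ofReal (f n ω))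
        = (fun k : ℕ => ENNReal.ofReal (Real.exp (c * (k : ℝ)))) ∘ (fun ω => min (τ ω) n) := rfl
    rw [this]
    exact measurable_from_top.comp (hτm.min measurable_const)
  have hmono : Monotone (fun n => (fun ω => ENNReal.ofReal (f n ω))) := by
    intro m n hmn ω
    refine ENNReal.ofReal_le_ofReal (Real.exp_le_exp.2 ?_)
    refine mul_le_mul_of_nonneg_left ?_ hc.le
    exact_mod_cast min_le_min (le_refl _) hmn
  have hsup : ∀ ω, (⨆ n, ENNReal.ofReal (f n ω)) = ENNReal.ofReal (Real.exp (c * (τ ω : ℝ))) := by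
    intro ω
    refine le_antisymm (iSup_le fun n => ENNReal.ofReal_le_ofReal (Real.exp_le_exp.2
      (mul_le_mul_of_nonneg_left (by exact_mod_cast min_le_left _ _) hc.le))) ?_
    refine le_iSup_of_le (τ ω) ?_
    simp [hf]
  have hlim : ∫⁻ ω, ENNReal.ofReal (Real.exp (c * (τ ω : ℝ))) ∂μ
      ≤ ENNReal.ofReal (∫ ω, V 0 ω ∂μ) := by
    have : (fun ω => ENNReal.ofReal (Real.exp (c * (τ ω : ℝ))))
        = fun ω => ⨆ n, ENNReal.ofReal (f n ω) := funext fun ω => (hsup ω).symm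
    rw [this, lintegral_iSup hmeasf hmono]
    exact iSup_le hlin
  have hmexp : Measurable (fun ω => Real.exp (c * (τ ω : ℝ))) := by
    have : (fun ω => Real.exp (c * (τ ω : ℝ)))
        = (fun k : ℕ => Real.exp (c * (k : ℝ))) ∘ τ := rfl
    rw [this]
    exact measurable_from_top.comp hτm
  have hnn : 0 ≤ᵐ[μ] fun ω => Real.exp (c * (τ ω : ℝ)) :=
    Filter.Eventually.of_forall fun ω => Real.exp_nonneg _
  rw [integral_eq_lintegral_of_nonneg_ae hnn hmexp.aestronglyMeasurable]
  refine ENNReal.toReal_le_of_le_ofReal ?_ hlim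
  refine integral_nonneg_of_ae ?_
  filter_upwards [hV1 0] with ω hω
  simp only [Pi.zero_apply]
  linarith
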